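/- For all c > 0, the expression for the limiting fraction of bins matched by GREEDY satisfies 1 - log(2 - e^{-c})/c ≥ 1 - e^{(e^{-c} - 1)}; that is, GREEDY's limiting matched fraction dominates OBLIVIOUS's for every c > 0. -/

import Mathlib

open Real

noncomputable def F0 (s : ℝ) : ℝ := -Real.log (1-s) - Real.exp s * Real.log (1+s)
noncomputable def F1 (s : ℝ) : ℝ := (1-s)⁻¹ - Real.exp s * (Real.log (1+s) + (1+s)⁻¹)
noncomputable def F2 (s : ℝ) : ℝ :=
  ((1-s)^2)⁻¹ - Real.exp s * (Real.log (1+s) + 2*(1+s)⁻¹ - ((1+s)^2)⁻¹)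
noncomputable def F3 (s : ℝ) : ℝ :=
  2*((1-s)^3)⁻¹ - Real.exp s * (Real.log (1+s) + 3*(1+s)⁻¹ - 3*((1+s)^2)⁻¹ + 2*((1+s)^3)⁻¹)

lemma hd0 (s : ℝ) (h0 : 0 ≤ s) (h1 : s < 1) : HasDerivAt F0 (F1 s) s := by
  have hmne : (1 - s) ≠ 0 := by linarith
  have hpne : (1 + s) ≠ 0 := by linarith
  have hm : HasDerivAt (fun x : ℝ => 1 - x) (-1) s := (hasDerivAt_id s).const_sub 1
  have hp : HasDerivAt (fun x : ℝ => 1 + x) 1 s := (hasDerivAt_id s).const_add 1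
  have hE : HasDerivAt Real.exp (Real.exp s) s := Real.hasDerivAt_exp s
  have hLm : HasDerivAt (fun x : ℝ => Real.log (1-x)) (-1 / (1-s)) s := hm.log hmne
  have hLp : HasDerivAt (fun x : ℝ => Real.log (1+x)) (1 / (1+s)) s := hp.log hpne
  have h := (hLm.neg).sub (hE.mul hLp)
  refine HasDerivAt.congr_deriv h ?_
  unfold F1
  ring

lemma hd1 (s : ℝ) (h0 : 0 ≤ s) (h1 : s < 1) : HasDerivAt F1 (F2 s) s := by
  have hmne : (1 - s) ≠ 0 := by linarith
  have hpne : (1 + s) ≠ 0 := by linarith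
  have hm : HasDerivAt (fun x : ℝ => 1 - x) (-1) s := (hasDerivAt_id s).const_sub 1
  have hp : HasDerivAt (fun x : ℝ => 1 + x) 1 s := (hasDerivAt_id s).const_add 1
  have hE : HasDerivAt Real.exp (Real.exp s) s := Real.hasDerivAt_exp s
  have hLp : HasDerivAt (fun x : ℝ => Real.log (1+x)) (1 / (1+s)) s := hp.log hpne
  have hIm : HasDerivAt (fun x : ℝ => (1-x)⁻¹) (-(-1) / (1-s)^2) s := hm.inv hmne
  have hIp : HasDerivAt (fun x : ℝ => (1+x)⁻¹) (-1 / (1+s)^2) s := by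
    exact hp.inv hpne
  have h := hIm.sub (hE.mul (hLp.add hIp))
  refine HasDerivAt.congr_deriv h ?_
  simp only [Pi.add_apply, Pi.sub_apply]
  unfold F2
  ring

lemma hd2 (s : ℝ) (h0 : 0 ≤ s) (h1 : s < 1) : HasDerivAt F2 (F3 s) s := by
  have hmne : (1 - s) ≠ 0 := by linarith
  have hpne : (1 + s) ≠ 0 := by linarith
  have hm : HasDerivAt (fun x : ℝ => 1 - x) (-1) s := (hasDerivAt_id s).const_sub 1
  have hp : HasDerivAt (fun x : ℝ => 1 + x) 1 s := (hasDerivAt_id s).const_add 1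
  have hE : HasDerivAt Real.exp (Real.exp s) s := Real.hasDerivAt_exp s
  have hLp : HasDerivAt (fun x : ℝ => Real.log (1+x)) (1 / (1+s)) s := hp.log hpne
  have hIm2 : HasDerivAt (fun x : ℝ => ((1-x)^2)⁻¹)
      (-((2:ℕ) * (1-s)^(2-1) * (-1)) / ((1-s)^2)^2) s :=
    (hm.pow 2).inv (pow_ne_zero _ hmne)
  have hIp1 : HasDerivAt (fun x : ℝ => (1+x)⁻¹) (-1 / (1+s)^2) s := by
    exact hp.inv hpne
  have hIp2 : HasDerivAt (fun x : ℝ => ((1+x)^2)⁻¹)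
      (-((2:ℕ) * (1+s)^(2-1) * 1) / ((1+s)^2)^2) s :=
    (hp.pow 2).inv (pow_ne_zero _ hpne)
  have h := hIm2.sub (hE.mul ((hLp.add (hIp1.const_mul 2)).sub hIp2))
  refine HasDerivAt.congr_deriv h ?_
  simp only [Pi.add_apply, Pi.sub_apply]
  unfold F3
  push_cast
  field_simp
  ring

lemma key3 (s : ℝ) (h0 : 0 ≤ s) (h1 : s < 1) : 0 ≤ F3 s := by
  have hmpos : (0:ℝ) < 1 - s := by linarith
  have hppos : (0:ℝ) < 1 + s := by linarith
  have hlog_nonneg : 0 ≤ Real.log (1+s) := Real.log_nonneg (by linarith)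
  have hlog_le : Real.log (1+s) ≤ s := by
    have := Real.log_le_sub_one_of_pos hppos
    linarith
  have hexp_le : Real.exp s ≤ (1-s)⁻¹ := by
    have h := Real.add_one_le_exp (-s)
    rw [Real.exp_neg] at h
    have hep : 0 < Real.exp s := Real.exp_pos s
    rw [le_inv_comm₀ hep hmpos] at *
    nlinarith [mul_pos hep hmpos]
  have hfrac : 3*(1+s)⁻¹ - 3*((1+s)^2)⁻¹ + 2*((1+s)^3)⁻¹ = (3*s^2+3*s+2)/(1+s)^3 := by
    field_simp
    ring
  have hfracpos : 0 ≤ (3*s^2+3*s+2)/(1+s)^3 := by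
    apply div_nonneg (by nlinarith) (by positivity)
  have hB : 0 ≤ Real.log (1+s) + 3*(1+s)⁻¹ - 3*((1+s)^2)⁻¹ + 2*((1+s)^3)⁻¹ := by
    rw [show Real.log (1+s) + 3*(1+s)⁻¹ - 3*((1+s)^2)⁻¹ + 2*((1+s)^3)⁻¹
        = Real.log (1+s) + (3*(1+s)⁻¹ - 3*((1+s)^2)⁻¹ + 2*((1+s)^3)⁻¹) by ring, hfrac]
    linarith
  have hBle : Real.log (1+s) + 3*(1+s)⁻¹ - 3*((1+s)^2)⁻¹ + 2*((1+s)^3)⁻¹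
      ≤ s + (3*s^2+3*s+2)/(1+s)^3 := by
    rw [show Real.log (1+s) + 3*(1+s)⁻¹ - 3*((1+s)^2)⁻¹ + 2*((1+s)^3)⁻¹
        = Real.log (1+s) + (3*(1+s)⁻¹ - 3*((1+s)^2)⁻¹ + 2*((1+s)^3)⁻¹) by ring, hfrac]
    linarith
  have hEB : Real.exp s * (Real.log (1+s) + 3*(1+s)⁻¹ - 3*((1+s)^2)⁻¹ + 2*((1+s)^3)⁻¹)
      ≤ (1-s)⁻¹ * (s + (3*s^2+3*s+2)/(1+s)^3) :=
    mul_le_mul hexp_le hBle hB (by positivity)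
  have hfinal : (1-s)⁻¹ * (s + (3*s^2+3*s+2)/(1+s)^3) ≤ 2*((1-s)^3)⁻¹ := by
    rw [← sub_nonneg]
    have heq : 2*((1-s)^3)⁻¹ - (1-s)⁻¹ * (s + (3*s^2+3*s+2)/(1+s)^3)
        = (s*(6+6*s+7*s^2-s^3-s^4-s^5)) / ((1-s)^3*(1+s)^3) := by
      field_simp
      ring
    rw [heq]
    apply div_nonneg
    · nlinarith [pow_le_one₀ h0 h1.le (n := 3), pow_le_one₀ h0 h1.le (n := 4),
        pow_le_one₀ h0 h1.le (n := 5)]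
    · positivity
  unfold F3
  linarith [hEB.trans hfinal]

lemma nonneg_of (f f' : ℝ → ℝ)
    (hf : ∀ x, 0 ≤ x → x < 1 → HasDerivAt f (f' x) x)
    (hf0 : f 0 = 0)
    (hf' : ∀ x, 0 ≤ x → x < 1 → 0 ≤ f' x) :
    ∀ s, 0 ≤ s → s < 1 → 0 ≤ f s := by
  intro s hs0 hs1
  have mono : MonotoneOn f (Set.Icc 0 s) := by
    apply monotoneOn_of_deriv_nonneg (convex_Icc 0 s)
    · intro x hx
      exact (hf x hx.1 (lt_of_le_of_lt hx.2 hs1)).continuousAt.continuousWithinAt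
    · intro x hx
      rw [interior_Icc] at hx
      exact (hf x hx.1.le (hx.2.trans hs1)).differentiableAt.differentiableWithinAt
    · intro x hx
      rw [interior_Icc] at hx
      rw [(hf x hx.1.le (hx.2.trans hs1)).deriv]
      exact hf' x hx.1.le (hx.2.trans hs1)
  have h := mono (Set.mem_Icc.mpr ⟨le_refl 0, hs0⟩) (Set.mem_Icc.mpr ⟨hs0, le_refl s⟩) hs0
  rw [hf0] at h
  exact h

lemma key2 (s : ℝ) (h0 : 0 ≤ s) (h1 : s < 1) : 0 ≤ F2 s := by
  apply nonneg_of F2 F3 hd2 _ key3 s h0 h1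
  unfold F2
  norm_num

lemma key1 (s : ℝ) (h0 : 0 ≤ s) (h1 : s < 1) : 0 ≤ F1 s := by
  apply nonneg_of F1 F2 hd1 _ key2 s h0 h1
  unfold F1
  norm_num

lemma key0 (s : ℝ) (h0 : 0 ≤ s) (h1 : s < 1) : 0 ≤ F0 s := by
  apply nonneg_of F0 F1 hd0 _ key1 s h0 h1
  unfold F0
  norm_num

theorem stmt_18 (c : ℝ) (hc : 0 < c) :
    1 - Real.log (2 - Real.exp (-c)) / c ≥ 1 - Real.exp (Real.exp (-c) - 1) := by
  set x := Real.exp (-c) with hx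
  have hx0 : 0 < x := Real.exp_pos _
  have hx1 : x < 1 := Real.exp_lt_one_iff.mpr (by linarith)
  have hF := key0 (1 - x) (by linarith) (by linarith)
  unfold F0 at hF
  have h1m : (1:ℝ) - (1 - x) = x := by ring
  have h1p : (1:ℝ) + (1 - x) = 2 - x := by ring
  rw [h1m, h1p] at hF
  have hlogx : Real.log x = -c := by rw [hx, Real.log_exp]
  rw [hlogx] at hF
  -- hF : 0 ≤ -(-c) - exp (1-x) * log (2-x), i.e. exp(1-x)*log(2-x) ≤ c
  have hE : 0 < Real.exp (x - 1) := Real.exp_pos _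
  have hprod : Real.exp (x - 1) * Real.exp (1 - x) = 1 := by
    rw [← Real.exp_add]
    norm_num
  have h2 : Real.exp (x-1) * (Real.exp (1-x) * Real.log (2-x)) = Real.log (2-x) := by
    rw [← mul_assoc, hprod, one_mul]
  have hgoal : Real.log (2 - x) ≤ Real.exp (x - 1) * c := by
    have h3 := mul_le_mul_of_nonneg_left (show Real.exp (1-x) * Real.log (2-x) ≤ c by linarith) hE.le
    rw [h2] at h3
    exact h3
  have : Real.log (2 - x) / c ≤ Real.exp (x - 1) := by
    rw [div_le_iff₀ hc]
    linarith [hgoal]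
  linarith
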